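/- Let g : B^N × B^N → B^N be any map. If the directed graph G̃_g is strongly connected, then G_g is chaotic on (X, d) in the sense of Devaney: (i) the set of periodic points of G_g is dense in X; (ii) G_g is topologically transitive (for any nonempty open sets U, V ⊆ X there exists k > 0 with G_g^{∘k}(U) ∩ V ≠ ∅); and (iii) G_g has sensitive dependence on initial conditions (there exists δ > 0 such that for every P ∈ X and every neighborhood V of P there exist Q ∈ V and n > 0 with d(G_g^{∘n}(P), G_g^{∘n}(Q)) > δ). -/

import Mathlib

open scoped BigOperators

/-- N-bit blocks: Boolean vectors of length N. -/
abbrev Block (N : ℕ) := Fin N → Bool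

/-- Infinite sequences of N-bit blocks. -/
abbrev Msg (N : ℕ) := ℕ → Block N

/-- The phase space X = B^N × S_N. -/
abbrev Phase (N : ℕ) := Block N × Msg N

/-- Hamming distance d_e on B^N. -/
noncomputable def dE {N : ℕ} (x y : Block N) : ℝ :=
  ∑ j : Fin N, if x j = y j then (0 : ℝ) else 1

/-- Distance d_m on message sequences. -/
noncomputable def dM {N : ℕ} (m m' : Msg N) : ℝ :=
  (9 / (N : ℝ)) * ∑' k : ℕ, (∑ i : Fin N, if m k i = m' k i then (0 : ℝ) else 1) / 10 ^ (k + 1)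

/-- The distance d on the phase space X. -/
noncomputable def dX {N : ℕ} (P Q : Phase N) : ℝ :=
  dE P.1 Q.1 + dM P.2 Q.2

/-- The shift on message sequences. -/
def shiftMsg {N : ℕ} (m : Msg N) : Msg N := fun k => m (k + 1)

/-- The dynamical system G_g(x, m) = (g(m^0, x), σ(m)). -/
def Gg {N : ℕ} (g : Block N → Block N → Block N) (P : Phase N) : Phase N :=
  (g (P.2 0) P.1, shiftMsg P.2)

/-- Open sets for the topology induced by the distance d on X. -/
def IsOpenX {N : ℕ} (U : Set (Phase N)) : Prop :=
  ∀ P ∈ U, ∃ ε : ℝ, 0 < ε ∧ ∀ Q : Phase N, dX P Q < ε → Q ∈ U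

section Helpers
variable {N : ℕ}

lemma dE_nonneg (x y : Block N) : 0 ≤ dE x y :=
  Finset.sum_nonneg fun j _ => by split <;> norm_num

lemma dE_le (x y : Block N) : dE x y ≤ N := by
  calc dE x y ≤ ∑ _j : Fin N, (1:ℝ) :=
        Finset.sum_le_sum fun j _ => by split <;> norm_num
    _ = N := by simp

lemma dE_self (x : Block N) : dE x x = 0 := by simp [dE]

lemma one_le_dE {x y : Block N} (h : x ≠ y) : 1 ≤ dE x y := by
  obtain ⟨j, hj⟩ := Function.ne_iff.1 h
  have h1 : (1:ℝ) = (if x j = y j then (0:ℝ) else 1) := by simp [hj]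
  rw [h1, dE]
  exact Finset.single_le_sum (f := fun i => if x i = y i then (0:ℝ) else 1)
    (fun i _ => by by_cases hxy : x i = y i <;> simp [hxy]) (Finset.mem_univ j)

lemma dM_eq (m m' : Msg N) :
    dM m m' = (9 / (N : ℝ)) * ∑' k : ℕ, dE (m k) (m' k) / 10 ^ (k + 1) := rfl

lemma term_nonneg (m m' : Msg N) (k : ℕ) : 0 ≤ dE (m k) (m' k) / 10 ^ (k + 1) :=
  div_nonneg (dE_nonneg _ _) (by positivity)

lemma summable_dM (m m' : Msg N) :
    Summable (fun k : ℕ => dE (m k) (m' k) / 10 ^ (k + 1)) := by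
  refine Summable.of_nonneg_of_le (term_nonneg m m') (fun k => ?_)
    ((summable_geometric_of_lt_one (r := (1:ℝ)/10) (by norm_num) (by norm_num)).mul_left
      ((N : ℝ) / 10))
  have h1 : dE (m k) (m' k) ≤ (N:ℝ) := dE_le _ _
  have h2 : ((N:ℝ)/10) * (1/10)^k = (N:ℝ) / 10^(k+1) := by
    rw [div_pow, one_pow, div_mul_div_comm, mul_one, pow_succ]
    ring
  rw [h2]
  gcongr

lemma dM_nonneg (m m' : Msg N) : 0 ≤ dM m m' := by
  rw [dM_eq]
  have h : 0 ≤ ∑' k : ℕ, dE (m k) (m' k) / 10 ^ (k + 1) :=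
    tsum_nonneg (term_nonneg m m')
  exact mul_nonneg (div_nonneg (by norm_num) (Nat.cast_nonneg N)) h

set_option maxHeartbeats 1000000 in
lemma dM_le_of_agree (hN : 1 ≤ N) {m m' : Msg N} (K : ℕ) (h : ∀ k < K, m k = m' k) :
    dM m m' ≤ (1/10 : ℝ)^K := by
  rw [dM_eq]
  have hs := summable_dM m m'
  have h0 : ∑ i ∈ Finset.range K, dE (m i) (m' i) / 10 ^ (i + 1) = 0 := by
    apply Finset.sum_eq_zero
    intro i hi
    rw [h i (Finset.mem_range.1 hi), dE_self]
    simp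
  have htail : (∑' k : ℕ, dE (m k) (m' k) / 10 ^ (k + 1))
      = ∑' k : ℕ, dE (m (k + K)) (m' (k + K)) / 10 ^ ((k + K) + 1) := by
    rw [← Summable.sum_add_tsum_nat_add K hs, h0, zero_add]
  rw [htail]
  have hb : ∀ k : ℕ, dE (m (k + K)) (m' (k + K)) / 10 ^ ((k + K) + 1)
      ≤ ((N:ℝ) * (1/10)^(K+1)) * (1/10)^k := by
    intro k
    have h1 : dE (m (k+K)) (m' (k+K)) ≤ (N:ℝ) := dE_le _ _
    have h2 : ((N:ℝ) * (1/10)^(K+1)) * (1/10)^k = (N:ℝ) / 10^((k+K)+1) := by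
      rw [div_pow, div_pow, one_pow, one_pow, show (k + K) + 1 = (K + 1) + k from by omega,
        pow_add]
      ring
    rw [h2]
    gcongr
  have hsum2 : Summable (fun k : ℕ => ((N:ℝ) * (1/10)^(K+1)) * (1/10)^k) :=
    (summable_geometric_of_lt_one (r := (1:ℝ)/10) (by norm_num) (by norm_num)).mul_left _
  have hle := Summable.tsum_le_tsum hb ((summable_nat_add_iff K).2 hs) hsum2
  have hNne : (N:ℝ) ≠ 0 := by
    have : (0:ℝ) < N := by exact_mod_cast hN
    linarith
  calc (9 / (N:ℝ)) * ∑' k : ℕ, dE (m (k + K)) (m' (k + K)) / 10 ^ ((k + K) + 1)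
      ≤ (9 / (N:ℝ)) * ∑' k : ℕ, ((N:ℝ) * (1/10)^(K+1)) * (1/10)^k := by
        exact mul_le_mul_of_nonneg_left hle (div_nonneg (by norm_num) (Nat.cast_nonneg N))
    _ = (1/10:ℝ)^K := by
        rw [tsum_mul_left, tsum_geometric_of_lt_one (by norm_num) (by norm_num)]
        rw [pow_succ]
        field_simp
        ring

lemma dM_lower (hN : 1 ≤ N) {m m' : Msg N} (h : m 0 ≠ m' 0) :
    9 / (10 * (N:ℝ)) ≤ dM m m' := by
  rw [dM_eq]
  have hs := summable_dM m m'
  have h0 : (1:ℝ)/10 ≤ dE (m 0) (m' 0) / 10 ^ (0 + 1) := by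
    have := one_le_dE h
    simp only [zero_add, pow_one]
    linarith
  have hle : dE (m 0) (m' 0) / 10 ^ (0 + 1) ≤ ∑' k : ℕ, dE (m k) (m' k) / 10 ^ (k + 1) :=
    Summable.le_tsum hs 0 (fun j _ => term_nonneg m m' j)
  have hNpos : (0:ℝ) < N := by exact_mod_cast hN
  calc 9 / (10 * (N:ℝ)) = (9 / (N:ℝ)) * (1/10) := by field_simp
    _ ≤ (9 / (N:ℝ)) * ∑' k : ℕ, dE (m k) (m' k) / 10 ^ (k + 1) := by
        exact mul_le_mul_of_nonneg_left (le_trans h0 hle)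
          (div_nonneg (by norm_num) (Nat.cast_nonneg N))

/-- The state after n steps. -/
def st (g : Block N → Block N → Block N) (m : Msg N) (x : Block N) : ℕ → Block N
  | 0 => x
  | n+1 => g (m n) (st g m x n)

lemma Gg_iter (g : Block N → Block N → Block N) (x : Block N) (m : Msg N) (n : ℕ) :
    (Gg g)^[n] (x, m) = (st g m x n, fun k => m (k + n)) := by
  induction n with
  | zero => simp [st]
  | succ n ih =>
    rw [Function.iterate_succ_apply', ih]
    unfold Gg shiftMsg
    refine Prod.ext ?_ ?_
    · show g (m (0 + n)) (st g m x n) = st g m x (n+1)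
      simp [st]
    · funext k
      show m ((k + 1) + n) = m (k + (n + 1))
      exact congrArg m (by omega)

lemma st_congr (g : Block N → Block N → Block N) {m m' : Msg N} (x : Block N) {n : ℕ}
    (h : ∀ k < n, m k = m' k) : st g m x n = st g m' x n := by
  induction n with
  | zero => rfl
  | succ n ih =>
    show g (m n) (st g m x n) = g (m' n) (st g m' x n)
    rw [h n (by omega), ih (fun k hk => h k (by omega))]

lemma st_add (g : Block N → Block N → Block N) (m : Msg N) (x : Block N) (K L : ℕ) :
    st g m x (K + L) = st g (fun k => m (k + K)) (st g m x K) L := by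
  induction L with
  | zero => rfl
  | succ L ih =>
    show g (m (K + L)) (st g m x (K + L)) = g (m (L + K)) _
    rw [ih, Nat.add_comm K L]

lemma exists_path (g : Block N → Block N → Block N)
    (hsc : ∀ x y : Block N, Relation.ReflTransGen (fun a b => ∃ m : Block N, g m a = b) x y)
    (a b : Block N) : ∃ (L : ℕ) (ms : Msg N), st g ms a L = b := by
  induction hsc a b with
  | refl => exact ⟨0, fun _ _ => false, rfl⟩
  | tail h1 h2 ih =>
    obtain ⟨L, ms, hms⟩ := ih
    obtain ⟨mm, hmm⟩ := h2
    refine ⟨L + 1, fun k => if k = L then mm else ms k, ?_⟩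
    show g (if L = L then mm else ms L) (st g _ a L) = _
    rw [if_pos rfl, st_congr g a (m' := ms) (fun k hk => if_neg (by omega)), hms, hmm]

lemma dX_close (hN : 1 ≤ N) {P Q : Phase N} (h1 : Q.1 = P.1) (K : ℕ)
    (h2 : ∀ k < K, P.2 k = Q.2 k) : dX P Q ≤ (1/10 : ℝ)^K := by
  unfold dX
  rw [h1, dE_self, zero_add]
  exact dM_le_of_agree hN K h2

lemma exists_K (ε : ℝ) (hε : 0 < ε) : ∃ K : ℕ, 1 ≤ K ∧ (1/10 : ℝ)^K < ε := by
  obtain ⟨K0, hK0⟩ := exists_pow_lt_of_lt_one hε (by norm_num : (1:ℝ)/10 < 1)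
  refine ⟨K0 + 1, by omega, lt_of_le_of_lt ?_ hK0⟩
  exact pow_le_pow_of_le_one (by norm_num) (by norm_num) (Nat.le_succ _)

end Helpers

/-- if the directed graph of g is strongly connected, then G_g is chaotic
on (X, d) in the sense of Devaney: (i) periodic points are dense, (ii) G_g is
topologically transitive, (iii) G_g has sensitive dependence on initial conditions. -/
theorem Gg_chaotic_of_strongly_connected
    {N : ℕ} (hN : 1 ≤ N) (g : Block N → Block N → Block N)
    (hsc : ∀ x y : Block N, Relation.ReflTransGen (fun a b => ∃ m : Block N, g m a = b) x y) :
    (∀ (P : Phase N) (ε : ℝ), 0 < ε →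
        ∃ (Q : Phase N) (n : ℕ), 1 ≤ n ∧ (Gg g)^[n] Q = Q ∧ dX P Q < ε) ∧
    (∀ U V : Set (Phase N), IsOpenX U → IsOpenX V → U.Nonempty → V.Nonempty →
        ∃ k : ℕ, 0 < k ∧ ((Gg g)^[k] '' U ∩ V).Nonempty) ∧
    (∃ δ : ℝ, 0 < δ ∧ ∀ P : Phase N, ∀ V : Set (Phase N), IsOpenX V → P ∈ V →
        ∃ Q ∈ V, ∃ n : ℕ, 0 < n ∧ dX ((Gg g)^[n] P) ((Gg g)^[n] Q) > δ) := by
  refine ⟨?_, ?_, ?_⟩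
  · -- (i) dense periodic points
    intro P ε hε
    obtain ⟨K, hK1, hKε⟩ := exists_K ε hε
    obtain ⟨L, ms, hms⟩ := exists_path g hsc (st g P.2 P.1 K) P.1
    set n := K + L with hn
    have hn1 : 1 ≤ n := by omega
    set base : Msg N := fun k => if k < K then P.2 k else ms (k - K) with hbase
    set mt : Msg N := fun k => base (k % n) with hmt
    have hmtlt : ∀ k, k < n → mt k = base k := by
      intro k hk
      show base (k % n) = base k
      rw [Nat.mod_eq_of_lt hk]
    have hbaselt : ∀ k, k < K → base k = P.2 k := by
      intro k hk
      show (if k < K then P.2 k else ms (k - K)) = P.2 k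
      rw [if_pos hk]
    refine ⟨(P.1, mt), n, hn1, ?_, ?_⟩
    · rw [Gg_iter]
      refine Prod.ext ?_ ?_
      · show st g mt P.1 n = P.1
        have e1 : st g mt P.1 n = st g base P.1 n :=
          st_congr g P.1 (fun k hk => hmtlt k hk)
        have e2 : st g base P.1 K = st g P.2 P.1 K :=
          st_congr g P.1 (fun k hk => hbaselt k hk)
        have e3 : st g base P.1 n = st g (fun k => base (k + K)) (st g base P.1 K) L :=
          st_add g base P.1 K L
        have e4 : st g (fun k => base (k + K)) (st g P.2 P.1 K) L
            = st g ms (st g P.2 P.1 K) L := by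
          apply st_congr g
          intro k hk
          show (if k + K < K then P.2 (k + K) else ms (k + K - K)) = ms k
          rw [if_neg (by omega), Nat.add_sub_cancel]
        rw [e1, e3, e2, e4, hms]
      · show (fun k => mt (k + n)) = mt
        funext k
        show base ((k + n) % n) = base (k % n)
        rw [Nat.add_mod_right]
    · have hd : dX P (P.1, mt) ≤ (1/10 : ℝ)^K := by
        refine dX_close (P := P) (Q := (P.1, mt)) hN rfl K ?_
        intro k hk
        show P.2 k = mt k
        rw [hmtlt k (by omega), hbaselt k hk]
      exact lt_of_le_of_lt hd hKε
  · -- (ii) transitivity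
    rintro U V hU hV ⟨P, hP⟩ ⟨P', hP'⟩
    obtain ⟨εU, hεU, hball⟩ := hU P hP
    obtain ⟨K, hK1, hKε⟩ := exists_K εU hεU
    obtain ⟨L, ms, hms⟩ := exists_path g hsc (st g P.2 P.1 K) P'.1
    set n := K + L with hn
    set mt : Msg N := fun k => if k < K then P.2 k else if k < n then ms (k - K) else P'.2 (k - n)
      with hmt
    have hmtlt : ∀ k, k < K → mt k = P.2 k := by
      intro k hk
      show (if k < K then P.2 k else _) = P.2 k
      rw [if_pos hk]
    have hQU : (P.1, mt) ∈ U := by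
      apply hball
      refine lt_of_le_of_lt (dX_close (P := P) (Q := (P.1, mt)) hN rfl K ?_) hKε
      intro k hk
      show P.2 k = mt k
      rw [hmtlt k hk]
    have hGn : (Gg g)^[n] (P.1, mt) = P' := by
      rw [Gg_iter]
      refine Prod.ext ?_ ?_
      · show st g mt P.1 n = P'.1
        have e2 : st g mt P.1 K = st g P.2 P.1 K :=
          st_congr g P.1 (fun k hk => hmtlt k hk)
        have e4 : st g (fun k => mt (k + K)) (st g P.2 P.1 K) L
            = st g ms (st g P.2 P.1 K) L := by
          apply st_congr g
          intro k hk
          show (if k + K < K then P.2 (k + K) else if k + K < n then ms (k + K - K)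
            else P'.2 (k + K - n)) = ms k
          rw [if_neg (by omega), if_pos (by omega), Nat.add_sub_cancel]
        rw [st_add g mt P.1 K L, e2, e4, hms]
      · show (fun k => mt (k + n)) = P'.2
        funext k
        show (if k + n < K then P.2 (k + n) else if k + n < n then ms (k + n - K)
          else P'.2 (k + n - n)) = P'.2 k
        rw [if_neg (by omega), if_neg (by omega), Nat.add_sub_cancel]
    exact ⟨n, by omega, P', ⟨(P.1, mt), hQU, hGn⟩, hP'⟩
  · -- (iii) sensitivity
    refine ⟨1 / (2 * (N:ℝ)), ?_, ?_⟩
    · have hNpos : (0:ℝ) < N := by exact_mod_cast hN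
      positivity
    intro P V hV hPV
    obtain ⟨ε, hε, hball⟩ := hV P hPV
    obtain ⟨K, hK1, hKε⟩ := exists_K ε hε
    set mt : Msg N := fun k => if k = K then (fun i => !(P.2 K i)) else P.2 k with hmt
    have hQV : (P.1, mt) ∈ V := by
      apply hball
      refine lt_of_le_of_lt (dX_close (P := P) (Q := (P.1, mt)) hN rfl K ?_) hKε
      intro k hk
      show P.2 k = (if k = K then _ else P.2 k)
      rw [if_neg (by omega)]
    refine ⟨(P.1, mt), hQV, K, by omega, ?_⟩
    rw [Gg_iter, Gg_iter]
    have hne : (fun k => P.2 (k + K)) 0 ≠ (fun k => mt (k + K)) 0 := by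
      show P.2 (0 + K) ≠ mt (0 + K)
      rw [Nat.zero_add]
      show P.2 K ≠ (if K = K then (fun i => !(P.2 K i)) else P.2 K)
      rw [if_pos rfl]
      intro hcontra
      have h2 := congrFun hcontra ⟨0, hN⟩
      simp at h2
    have hlow := dM_lower (m := fun k => P.2 (k + K)) (m' := fun k => mt (k + K)) hN hne
    have hdE := dE_nonneg (st g P.2 P.1 K) (st g mt P.1 K)
    have hNpos : (0:ℝ) < N := by exact_mod_cast hN
    have hlt : 1 / (2 * (N:ℝ)) < 9 / (10 * (N:ℝ)) := by
      rw [div_lt_div_iff₀ (by linarith) (by linarith)]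
      nlinarith
    show dX _ _ > _
    unfold dX
    simp only
    linarith
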